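/- Let d ≥ 1 and 1 ≤ k ≤ d be integers. The ℂ-subspace of V_d consisting of those triples (a₀,a₁,a₂) for which the dehomogenizations a(x,y) = a₀(x,y,1) and b(x,y) = a₁(x,y,1) vanish to order at least k at the origin and whose degree-k homogeneous components a_k, b_k satisfy a_k·x + b_k·y = 0 (i.e., the corresponding foliation has a dicritical singularity of order ≥ k at p = [0:0:1]) has dimension (d² + 4d + 3) − (k² + 2k + 2). (This is the fiber of the bundle D_k; it yields that the locus D_k of foliations with a dicritical singularity of order ≥ k has codimension k(k+2) in P^N.) -/

import Mathlib

open MvPolynomial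

/-- The linear "Euler" map sending a triple `(a₀,a₁,a₂)` of polynomials to
`a₀z₀ + a₁z₁ + a₂z₂`. -/
noncomputable def eulerMap :
    (Fin 3 → MvPolynomial (Fin 3) ℂ) →ₗ[ℂ] MvPolynomial (Fin 3) ℂ :=
  ∑ i : Fin 3, (LinearMap.mulRight ℂ (X i : MvPolynomial (Fin 3) ℂ)).comp (LinearMap.proj i)

/-- The space `V_d` of triples `(a₀,a₁,a₂)` of homogeneous polynomials of
degree `d+1` in `ℂ[z₀,z₁,z₂]` satisfying `a₀z₀ + a₁z₁ + a₂z₂ = 0`. -/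
noncomputable def foliationSpace (d : ℕ) : Submodule ℂ (Fin 3 → MvPolynomial (Fin 3) ℂ) :=
  (⨅ i : Fin 3, Submodule.comap (LinearMap.proj i)
      (homogeneousSubmodule (Fin 3) ℂ (d + 1))) ⊓ LinearMap.ker eulerMap

/-- Dehomogenization `p(z₀,z₁,z₂) ↦ p(x,y,1)` as a linear map. -/
noncomputable def dehom : MvPolynomial (Fin 3) ℂ →ₗ[ℂ] MvPolynomial (Fin 2) ℂ :=
  (aeval ![X 0, X 1, 1] : MvPolynomial (Fin 3) ℂ →ₐ[ℂ] MvPolynomial (Fin 2) ℂ).toLinearMap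

/-- The subspace of polynomials in `ℂ[x,y]` vanishing to order `≥ k`
at the origin: all homogeneous components of degree `< k` vanish. -/
noncomputable def vanishToOrder (k : ℕ) : Submodule ℂ (MvPolynomial (Fin 2) ℂ) :=
  ⨅ n ∈ Finset.range k, LinearMap.ker (homogeneousComponent n :
    MvPolynomial (Fin 2) ℂ →ₗ[ℂ] MvPolynomial (Fin 2) ℂ)

/-- The fiber of `M_k`: triples in `V_d` whose dehomogenized coefficients
`a₀(x,y,1)`, `a₁(x,y,1)` vanish to order `≥ k` at the origin. -/
noncomputable def MkFiber (d k : ℕ) : Submodule ℂ (Fin 3 → MvPolynomial (Fin 3) ℂ) :=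
  foliationSpace d
    ⊓ Submodule.comap (dehom.comp (LinearMap.proj 0)) (vanishToOrder k)
    ⊓ Submodule.comap (dehom.comp (LinearMap.proj 1)) (vanishToOrder k)

/-- The linear map sending a triple `(a₀,a₁,a₂)` to `a_k·x + b_k·y`, where
`a_k`, `b_k` are the degree-`k` homogeneous components of `a₀(x,y,1)` and
`a₁(x,y,1)`.  Its vanishing is the dicritical condition in order `k`. -/
noncomputable def dicriticalMap (k : ℕ) :
    (Fin 3 → MvPolynomial (Fin 3) ℂ) →ₗ[ℂ] MvPolynomial (Fin 2) ℂ :=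
  (LinearMap.mulRight ℂ (X 0 : MvPolynomial (Fin 2) ℂ)).comp
      ((homogeneousComponent k).comp (dehom.comp (LinearMap.proj 0)))
    + (LinearMap.mulRight ℂ (X 1 : MvPolynomial (Fin 2) ℂ)).comp
      ((homogeneousComponent k).comp (dehom.comp (LinearMap.proj 1)))

/-- The fiber of `D_k`: triples in `V_d` with a dicritical singularity of
order `≥ k` at `p = [0:0:1]`. -/
noncomputable def DkFiber (d k : ℕ) : Submodule ℂ (Fin 3 → MvPolynomial (Fin 3) ℂ) :=
  MkFiber d k ⊓ LinearMap.ker (dicriticalMap k)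

noncomputable def E2 (i j : ℕ) : Fin 2 →₀ ℕ := Finsupp.single 0 i + Finsupp.single 1 j
noncomputable def E3 (i j m : ℕ) : Fin 3 →₀ ℕ :=
  Finsupp.single 0 i + Finsupp.single 1 j + Finsupp.single 2 m

@[simp] lemma E3_apply0 (i j m : ℕ) : E3 i j m 0 = i := by simp [E3, Finsupp.single_apply]
@[simp] lemma E3_apply1 (i j m : ℕ) : E3 i j m 1 = j := by simp [E3, Finsupp.single_apply]
@[simp] lemma E3_apply2 (i j m : ℕ) : E3 i j m 2 = m := by simp [E3, Finsupp.single_apply]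
@[simp] lemma E2_apply0 (i j : ℕ) : E2 i j 0 = i := by simp [E2, Finsupp.single_apply]
@[simp] lemma E2_apply1 (i j : ℕ) : E2 i j 1 = j := by simp [E2, Finsupp.single_apply]

lemma eq_E3 (u : Fin 3 →₀ ℕ) : u = E3 (u 0) (u 1) (u 2) := by
  ext a; fin_cases a <;> simp

lemma eq_E2 (u : Fin 2 →₀ ℕ) : u = E2 (u 0) (u 1) := by
  ext a; fin_cases a <;> simp

lemma E3_inj {i j m i' j' m' : ℕ} : E3 i j m = E3 i' j' m' ↔ i = i' ∧ j = j' ∧ m = m' := by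
  constructor
  · intro h
    refine ⟨?_, ?_, ?_⟩
    · have := congrFun (congrArg (↑· : (Fin 3 →₀ ℕ) → Fin 3 → ℕ) h) 0; simpa using this
    · have := congrFun (congrArg (↑· : (Fin 3 →₀ ℕ) → Fin 3 → ℕ) h) 1; simpa using this
    · have := congrFun (congrArg (↑· : (Fin 3 →₀ ℕ) → Fin 3 → ℕ) h) 2; simpa using this
  · rintro ⟨rfl, rfl, rfl⟩; rfl

lemma E2_inj {i j i' j' : ℕ} : E2 i j = E2 i' j' ↔ i = i' ∧ j = j' := by
  constructor
  · intro h
    constructor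
    · have := congrFun (congrArg (↑· : (Fin 2 →₀ ℕ) → Fin 2 → ℕ) h) 0; simpa using this
    · have := congrFun (congrArg (↑· : (Fin 2 →₀ ℕ) → Fin 2 → ℕ) h) 1; simpa using this
  · rintro ⟨rfl, rfl⟩; rfl

lemma degree_fin3 (u : Fin 3 →₀ ℕ) : u.degree = u 0 + u 1 + u 2 := by
  rw [Finsupp.degree_apply, Finset.sum_subset (Finset.subset_univ u.support)]
  · rw [Fin.sum_univ_three]
  · intro x _ hx; simpa using (Finsupp.notMem_support_iff.mp hx)

lemma degree_fin2 (u : Fin 2 →₀ ℕ) : u.degree = u 0 + u 1 := by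
  rw [Finsupp.degree_apply, Finset.sum_subset (Finset.subset_univ u.support)]
  · rw [Fin.sum_univ_two]
  · intro x _ hx; simpa using (Finsupp.notMem_support_iff.mp hx)

@[simp] lemma E3_degree (i j m : ℕ) : (E3 i j m).degree = i + j + m := by
  rw [degree_fin3]; simp

@[simp] lemma E2_degree (i j : ℕ) : (E2 i j).degree = i + j := by
  rw [degree_fin2]; simp

lemma monomial_E3 (i j m : ℕ) (c : ℂ) :
    (monomial (E3 i j m) c : MvPolynomial (Fin 3) ℂ) = C c * X 0 ^ i * X 1 ^ j * X 2 ^ m := by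
  simp [E3, X_pow_eq_monomial, monomial_mul, C_mul_monomial]

lemma monomial_E2 (i j : ℕ) (c : ℂ) :
    (monomial (E2 i j) c : MvPolynomial (Fin 2) ℂ) = C c * X 0 ^ i * X 1 ^ j := by
  simp [E2, X_pow_eq_monomial, monomial_mul, C_mul_monomial]

lemma dehom_monomial (i j m : ℕ) (c : ℂ) :
    dehom (monomial (E3 i j m) c) = monomial (E2 i j) c := by
  rw [dehom, AlgHom.toLinearMap_apply, monomial_E3, monomial_E2]
  simp

lemma coeff_dehom {p : MvPolynomial (Fin 3) ℂ} {D : ℕ} (hp : p.IsHomogeneous D) (i j : ℕ) :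
    coeff (E2 i j) (dehom p) = coeff (E3 i j (D - (i + j))) p := by
  have step : ∀ v ∈ p.support,
      dehom (monomial v (coeff v p)) = monomial (E2 (v 0) (v 1)) (coeff v p) := by
    intro v _
    conv_lhs => rw [eq_E3 v]
    rw [dehom_monomial, ← eq_E3 v]
  conv_lhs => rw [p.as_sum]
  rw [map_sum, Finset.sum_congr rfl step, coeff_sum]
  simp_rw [coeff_monomial]
  have key : ∀ v ∈ p.support,
      (if E2 (v 0) (v 1) = E2 i j then coeff v p else 0)
        = if v = E3 i j (D - (i + j)) then coeff v p else 0 := by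
    intro v hv
    have hdeg : v 0 + v 1 + v 2 = D := by
      have h : v.degree = D := by
        by_contra h
        exact (MvPolynomial.mem_support_iff.mp hv) (hp.coeff_eq_zero h)
      rwa [degree_fin3] at h
    by_cases hij : v 0 = i ∧ v 1 = j
    · obtain ⟨h0, h1⟩ := hij
      have h2 : v 2 = D - (i + j) := by omega
      have hv3 : v = E3 i j (D - (i + j)) := by rw [eq_E3 v, h0, h1, h2]
      rw [if_pos (E2_inj.mpr ⟨h0, h1⟩), if_pos hv3]
    · rw [if_neg (fun h => hij (E2_inj.mp h)), if_neg]
      intro h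
      rw [h] at hij
      simp at hij
  rw [Finset.sum_congr rfl key, Finset.sum_ite_eq' p.support]
  split
  · rfl
  · next h => rw [MvPolynomial.notMem_support_iff.mp h]

lemma coeff_hc_dehom {p : MvPolynomial (Fin 3) ℂ} {D : ℕ} (hp : p.IsHomogeneous D)
    (i j n : ℕ) (hij : i + j = n) :
    coeff (E2 i j) (homogeneousComponent n (dehom p)) = coeff (E3 i j (D - n)) p := by
  rw [coeff_homogeneousComponent, E2_degree, if_pos hij, coeff_dehom hp, hij]

lemma hc_monomial_E2 (n i j : ℕ) (c : ℂ) :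
    homogeneousComponent n (monomial (E2 i j) c : MvPolynomial (Fin 2) ℂ)
      = if n = i + j then monomial (E2 i j) c else 0 :=
  homogeneousComponent_of_mem (by
    rw [mem_homogeneousSubmodule]
    exact isHomogeneous_monomial _ (E2_degree i j))

lemma eulerMap_apply (v : Fin 3 → MvPolynomial (Fin 3) ℂ) :
    eulerMap v = v 0 * X 0 + v 1 * X 1 + v 2 * X 2 := by
  simp [eulerMap, Fin.sum_univ_three]

lemma dicriticalMap_apply (k : ℕ) (v : Fin 3 → MvPolynomial (Fin 3) ℂ) :
    dicriticalMap k v = homogeneousComponent k (dehom (v 0)) * X 0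
      + homogeneousComponent k (dehom (v 1)) * X 1 := by
  simp [dicriticalMap]

lemma mem_DkFiber_iff (d k : ℕ) (v : Fin 3 → MvPolynomial (Fin 3) ℂ) :
    v ∈ DkFiber d k ↔ (∀ i, (v i).IsHomogeneous (d+1)) ∧ eulerMap v = 0
      ∧ (∀ n, n < k → homogeneousComponent n (dehom (v 0)) = 0)
      ∧ (∀ n, n < k → homogeneousComponent n (dehom (v 1)) = 0)
      ∧ dicriticalMap k v = 0 := by
  simp only [DkFiber, MkFiber, foliationSpace, vanishToOrder, Submodule.mem_inf,
    Submodule.mem_iInf, LinearMap.mem_ker, Submodule.mem_comap, mem_homogeneousSubmodule,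
    LinearMap.proj_apply, LinearMap.comp_apply, Finset.mem_range]
  tauto

noncomputable def Z (i j m : ℕ) : MvPolynomial (Fin 3) ℂ := monomial (E3 i j m) (1 : ℂ)

lemma Z_isHomogeneous (i j m : ℕ) : (Z i j m).IsHomogeneous (i + j + m) :=
  isHomogeneous_monomial _ (E3_degree i j m)

lemma E3_add_single0 (i j m : ℕ) : E3 i j m + Finsupp.single 0 1 = E3 (i+1) j m := by
  ext a; fin_cases a <;> simp [E3, Finsupp.single_apply]
lemma E3_add_single1 (i j m : ℕ) : E3 i j m + Finsupp.single 1 1 = E3 i (j+1) m := by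
  ext a; fin_cases a <;> simp [E3, Finsupp.single_apply]
lemma E3_add_single2 (i j m : ℕ) : E3 i j m + Finsupp.single 2 1 = E3 i j (m+1) := by
  ext a; fin_cases a <;> simp [E3, Finsupp.single_apply]
lemma E2_add_single0 (i j : ℕ) : E2 i j + Finsupp.single 0 1 = E2 (i+1) j := by
  ext a; fin_cases a <;> simp [E2, Finsupp.single_apply]
lemma E2_add_single1 (i j : ℕ) : E2 i j + Finsupp.single 1 1 = E2 i (j+1) := by
  ext a; fin_cases a <;> simp [E2, Finsupp.single_apply]

lemma X_eq_monomial3 (s : Fin 3) : (X s : MvPolynomial (Fin 3) ℂ) = monomial (Finsupp.single s 1) 1 := by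
  rw [← pow_one (X s : MvPolynomial (Fin 3) ℂ), X_pow_eq_monomial]
lemma X_eq_monomial2 (s : Fin 2) : (X s : MvPolynomial (Fin 2) ℂ) = monomial (Finsupp.single s 1) 1 := by
  rw [← pow_one (X s : MvPolynomial (Fin 2) ℂ), X_pow_eq_monomial]

lemma Z_mul_X0 (i j m : ℕ) : Z i j m * X 0 = Z (i+1) j m := by
  rw [Z, Z, X_eq_monomial3, monomial_mul, E3_add_single0, mul_one]
lemma Z_mul_X1 (i j m : ℕ) : Z i j m * X 1 = Z i (j+1) m := by
  rw [Z, Z, X_eq_monomial3, monomial_mul, E3_add_single1, mul_one]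
lemma Z_mul_X2 (i j m : ℕ) : Z i j m * X 2 = Z i j (m+1) := by
  rw [Z, Z, X_eq_monomial3, monomial_mul, E3_add_single2, mul_one]

lemma M2_mul_X0 (i j : ℕ) (c : ℂ) :
    (monomial (E2 i j) c : MvPolynomial (Fin 2) ℂ) * X 0 = monomial (E2 (i+1) j) c := by
  rw [X_eq_monomial2, monomial_mul, E2_add_single0, mul_one]
lemma M2_mul_X1 (i j : ℕ) (c : ℂ) :
    (monomial (E2 i j) c : MvPolynomial (Fin 2) ℂ) * X 1 = monomial (E2 i (j+1)) c := by
  rw [X_eq_monomial2, monomial_mul, E2_add_single1, mul_one]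

lemma dehom_Z (i j m : ℕ) : dehom (Z i j m) = monomial (E2 i j) 1 := dehom_monomial i j m 1

lemma hc_dehom_Z (n i j m : ℕ) :
    homogeneousComponent n (dehom (Z i j m))
      = if n = i + j then monomial (E2 i j) (1:ℂ) else 0 := by
  rw [dehom_Z, hc_monomial_E2]

noncomputable def gen (d : ℕ) (x : ℕ × ℕ × Fin 3) : Fin 3 → MvPolynomial (Fin 3) ℂ :=
  if x.2.2 = 0 then
    ![Z x.2.1 (x.1 - x.2.1) (d+1-x.1), 0, -Z (x.2.1+1) (x.1-x.2.1) (d-x.1)]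
  else if x.2.2 = 1 then
    ![0, Z x.2.1 (x.1-x.2.1) (d+1-x.1), -Z x.2.1 (x.1-x.2.1+1) (d-x.1)]
  else
    ![Z x.2.1 (x.1-x.2.1) (d+1-x.1), -Z (x.2.1+1) (x.1-1-x.2.1) (d+1-x.1), 0]

lemma gen_0 (d n t : ℕ) : gen d (n,t,0) =
    ![Z t (n-t) (d+1-n), 0, -Z (t+1) (n-t) (d-n)] := by simp [gen]
lemma gen_1 (d n t : ℕ) : gen d (n,t,1) =
    ![0, Z t (n-t) (d+1-n), -Z t (n-t+1) (d-n)] := by simp [gen]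
lemma gen_2 (d n t : ℕ) : gen d (n,t,2) =
    ![Z t (n-t) (d+1-n), -Z (t+1) (n-1-t) (d+1-n), 0] := by simp [gen]

noncomputable def Sgen (d k : ℕ) : Finset (ℕ × ℕ × Fin 3) :=
  ((Finset.Ioc k d).biUnion fun n => (Finset.range (n+1)).image fun t => (n, t, (0:Fin 3)))
  ∪ ((Finset.Ioc k d).biUnion fun n => (Finset.range (n+1)).image fun t => (n, t, (1:Fin 3)))
  ∪ (((Finset.range k).image fun t => (k, t, (2:Fin 3)))
    ∪ ((Finset.range (d+1)).image fun t => (d+1, t, (2:Fin 3))))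

lemma mem_Sgen {d k : ℕ} {x : ℕ × ℕ × Fin 3} : x ∈ Sgen d k ↔
    (∃ n t, (k < n ∧ n ≤ d) ∧ t ≤ n ∧ ((n,t,(0:Fin 3)) = x ∨ (n,t,(1:Fin 3)) = x))
    ∨ (∃ t, t < k ∧ (k,t,(2:Fin 3)) = x) ∨ (∃ t, t < d+1 ∧ (d+1,t,(2:Fin 3)) = x) := by
  simp only [Sgen, Finset.mem_union, Finset.mem_biUnion, Finset.mem_image, Finset.mem_Ioc,
    Finset.mem_range]
  constructor
  · rintro ((⟨n,⟨h1,h2⟩,t,ht,rfl⟩|⟨n,⟨h1,h2⟩,t,ht,rfl⟩)|(⟨t,ht,rfl⟩|⟨t,ht,rfl⟩))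
    · exact Or.inl ⟨n,t,⟨h1,h2⟩,Nat.lt_succ_iff.mp ht,Or.inl rfl⟩
    · exact Or.inl ⟨n,t,⟨h1,h2⟩,Nat.lt_succ_iff.mp ht,Or.inr rfl⟩
    · exact Or.inr (Or.inl ⟨t,ht,rfl⟩)
    · exact Or.inr (Or.inr ⟨t,ht,rfl⟩)
  · rintro (⟨n,t,⟨h1,h2⟩,ht,(rfl|rfl)⟩|⟨t,ht,rfl⟩|⟨t,ht,rfl⟩)
    · exact Or.inl (Or.inl ⟨n,⟨h1,h2⟩,t,Nat.lt_succ_iff.mpr ht,rfl⟩)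
    · exact Or.inl (Or.inr ⟨n,⟨h1,h2⟩,t,Nat.lt_succ_iff.mpr ht,rfl⟩)
    · exact Or.inr (Or.inl ⟨t,ht,rfl⟩)
    · exact Or.inr (Or.inr ⟨t,ht,rfl⟩)

lemma isHomog_neg {p : MvPolynomial (Fin 3) ℂ} {n : ℕ} (h : p.IsHomogeneous n) :
    (-p).IsHomogeneous n := by
  rw [← mem_homogeneousSubmodule] at h ⊢
  exact Submodule.neg_mem _ h

lemma gen0_mem (d k n t : ℕ) (h1 : k < n) (h2 : n ≤ d) (ht : t ≤ n) :
    gen d (n,t,0) ∈ DkFiber d k := by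
  rw [mem_DkFiber_iff, gen_0]
  refine ⟨?_, ?_, ?_, ?_, ?_⟩
  · intro i
    fin_cases i
    · show (Z t (n-t) (d+1-n)).IsHomogeneous (d+1)
      have e : t + (n-t) + (d+1-n) = d+1 := by omega
      have h := Z_isHomogeneous t (n-t) (d+1-n); rwa [e] at h
    · exact isHomogeneous_zero _ _ _
    · show (-Z (t+1) (n-t) (d-n)).IsHomogeneous (d+1)
      have e : (t+1) + (n-t) + (d-n) = d+1 := by omega
      have h := Z_isHomogeneous (t+1) (n-t) (d-n); rw [e] at h; exact isHomog_neg h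
  · rw [eulerMap_apply]
    simp only [Matrix.cons_val_zero, Matrix.cons_val_one, Matrix.head_cons,
      Matrix.cons_val_two, Matrix.tail_cons]
    rw [Z_mul_X0, zero_mul, neg_mul, Z_mul_X2, (by omega : d - n + 1 = d+1-n)]
    ring
  · intro n' hn'
    simp only [Matrix.cons_val_zero]
    rw [hc_dehom_Z, if_neg (by omega)]
  · intro n' hn'
    simp only [Matrix.cons_val_one, Matrix.head_cons, Matrix.cons_val_zero]
    rw [map_zero, map_zero]
  · rw [dicriticalMap_apply]
    simp only [Matrix.cons_val_zero, Matrix.cons_val_one, Matrix.head_cons]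
    rw [hc_dehom_Z, if_neg (by omega), map_zero, map_zero]
    ring

lemma gen1_mem (d k n t : ℕ) (h1 : k < n) (h2 : n ≤ d) (ht : t ≤ n) :
    gen d (n,t,1) ∈ DkFiber d k := by
  rw [mem_DkFiber_iff, gen_1]
  refine ⟨?_, ?_, ?_, ?_, ?_⟩
  · intro i
    fin_cases i
    · exact isHomogeneous_zero _ _ _
    · show (Z t (n-t) (d+1-n)).IsHomogeneous (d+1)
      have e : t + (n-t) + (d+1-n) = d+1 := by omega
      have h := Z_isHomogeneous t (n-t) (d+1-n); rwa [e] at h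
    · show (-Z t (n-t+1) (d-n)).IsHomogeneous (d+1)
      have e : t + (n-t+1) + (d-n) = d+1 := by omega
      have h := Z_isHomogeneous t (n-t+1) (d-n); rw [e] at h; exact isHomog_neg h
  · rw [eulerMap_apply]
    simp only [Matrix.cons_val_zero, Matrix.cons_val_one, Matrix.head_cons,
      Matrix.cons_val_two, Matrix.tail_cons]
    rw [Z_mul_X1, zero_mul, neg_mul, Z_mul_X2, (by omega : d - n + 1 = d+1-n)]
    ring
  · intro n' hn'
    simp only [Matrix.cons_val_zero]
    rw [map_zero, map_zero]
  · intro n' hn'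
    simp only [Matrix.cons_val_one, Matrix.head_cons, Matrix.cons_val_zero]
    rw [hc_dehom_Z, if_neg (by omega)]
  · rw [dicriticalMap_apply]
    simp only [Matrix.cons_val_zero, Matrix.cons_val_one, Matrix.head_cons]
    rw [hc_dehom_Z, if_neg (by omega), map_zero, map_zero]
    ring

lemma gen2_mem (d k n t : ℕ) (hk2 : k ≤ d) (hn : n = k ∨ n = d+1) (ht : t < n) :
    gen d (n,t,2) ∈ DkFiber d k := by
  have hn' : n ≤ d + 1 := by omega
  have hkn : k ≤ n := by omega
  rw [mem_DkFiber_iff, gen_2]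
  refine ⟨?_, ?_, ?_, ?_, ?_⟩
  · intro i
    fin_cases i
    · show (Z t (n-t) (d+1-n)).IsHomogeneous (d+1)
      have e : t + (n-t) + (d+1-n) = d+1 := by omega
      have h := Z_isHomogeneous t (n-t) (d+1-n); rwa [e] at h
    · show (-Z (t+1) (n-1-t) (d+1-n)).IsHomogeneous (d+1)
      have e : (t+1) + (n-1-t) + (d+1-n) = d+1 := by omega
      have h := Z_isHomogeneous (t+1) (n-1-t) (d+1-n); rw [e] at h; exact isHomog_neg h
    · exact isHomogeneous_zero _ _ _
  · rw [eulerMap_apply]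
    simp only [Matrix.cons_val_zero, Matrix.cons_val_one, Matrix.head_cons,
      Matrix.cons_val_two, Matrix.tail_cons]
    rw [Z_mul_X0, zero_mul, neg_mul, Z_mul_X1, (by omega : n - 1 - t + 1 = n-t)]
    ring
  · intro n' hn''
    simp only [Matrix.cons_val_zero]
    rw [hc_dehom_Z, if_neg (by omega)]
  · intro n' hn''
    simp only [Matrix.cons_val_one, Matrix.head_cons, Matrix.cons_val_zero]
    rw [map_neg, map_neg, hc_dehom_Z, if_neg (by omega), neg_zero]
  · rw [dicriticalMap_apply]
    simp only [Matrix.cons_val_zero, Matrix.cons_val_one, Matrix.head_cons]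
    rcases hn with rfl | rfl
    · rw [hc_dehom_Z, if_pos (by omega), map_neg, map_neg, hc_dehom_Z, if_pos (by omega),
        M2_mul_X0, neg_mul, M2_mul_X1, (by omega : n - 1 - t + 1 = n - t)]
      ring
    · rw [hc_dehom_Z, if_neg (by omega), map_neg, map_neg, hc_dehom_Z, if_neg (by omega)]
      ring

lemma gen_mem (d k : ℕ) (hk2 : k ≤ d) {x : ℕ × ℕ × Fin 3} (hx : x ∈ Sgen d k) :
    gen d x ∈ DkFiber d k := by
  rcases mem_Sgen.mp hx with ⟨n,t,⟨h1,h2⟩,ht,(rfl|rfl)⟩|⟨t,ht,rfl⟩|⟨t,ht,rfl⟩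
  · exact gen0_mem d k n t h1 h2 ht
  · exact gen1_mem d k n t h1 h2 ht
  · exact gen2_mem d k k t hk2 (Or.inl rfl) ht
  · exact gen2_mem d k (d+1) t hk2 (Or.inr rfl) ht

lemma coeff_Z (a b c i j m : ℕ) :
    coeff (E3 a b c) (Z i j m) = if i = a ∧ j = b ∧ m = c then (1:ℂ) else 0 := by
  simp [Z, coeff_monomial, E3_inj]

lemma coeff_negZ (a b c i j m : ℕ) :
    coeff (E3 a b c) (-Z i j m) = if i = a ∧ j = b ∧ m = c then (-1:ℂ) else 0 := by
  rw [coeff_neg, coeff_Z]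
  split <;> simp

noncomputable def keyIdx (d : ℕ) (x : ℕ × ℕ × Fin 3) : Fin 3 →₀ ℕ :=
  E3 x.2.1 (x.1 - x.2.1) (d+1-x.1)

def keySlot (x : ℕ × ℕ × Fin 3) : Fin 3 := if x.2.2 = 1 then 1 else 0

lemma trip_eq_iff {a b : ℕ} {c : Fin 3} {a' b' : ℕ} {c' : Fin 3} :
    ((a,b,c) = (a',b',c')) ↔ a = a' ∧ b = b' ∧ c = c' := by simp [Prod.ext_iff]


lemma keySlot_0 (n t : ℕ) : keySlot (n,t,0) = 0 := rfl
lemma keySlot_1 (n t : ℕ) : keySlot (n,t,1) = 1 := rfl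
lemma keySlot_2 (n t : ℕ) : keySlot (n,t,2) = 0 := rfl
lemma keyIdx_eq (d n t : ℕ) (s : Fin 3) : keyIdx d (n,t,s) = E3 t (n-t) (d+1-n) := rfl

lemma delta (d k : ℕ) (hk2 : k ≤ d) {x y : ℕ × ℕ × Fin 3}
    (hx : x ∈ Sgen d k) (hy : y ∈ Sgen d k) :
    coeff (keyIdx d x) (gen d y (keySlot x)) = if x = y then 1 else 0 := by
  rcases mem_Sgen.mp hx with ⟨n,t,⟨h1,h2⟩,ht,(rfl|rfl)⟩|⟨t,ht,rfl⟩|⟨t,ht,rfl⟩ <;>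
    rcases mem_Sgen.mp hy with ⟨n',t',⟨h1',h2'⟩,ht',(rfl|rfl)⟩|⟨t',ht',rfl⟩|⟨t',ht',rfl⟩
  -- case (0,0)
  · rw [keyIdx_eq, show keySlot (n,t,(0:Fin 3)) = 0 from rfl, gen_0]
    simp only [Matrix.cons_val_zero]
    rw [coeff_Z]
    by_cases h : n = n' ∧ t = t'
    · obtain ⟨rfl, rfl⟩ := h
      rw [if_pos ⟨rfl, rfl, rfl⟩, if_pos rfl]
    · rw [if_neg (by rintro ⟨e1,e2,e3⟩; exact h ⟨by omega, by omega⟩),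
        if_neg (by rw [trip_eq_iff]; rintro ⟨e1,e2,-⟩; exact h ⟨e1,e2⟩)]
  -- case (0,1)
  · rw [keyIdx_eq, show keySlot (n,t,(0:Fin 3)) = 0 from rfl, gen_1]
    simp only [Matrix.cons_val_zero]
    rw [coeff_zero, if_neg (by rw [trip_eq_iff]; rintro ⟨-,-,e⟩; exact absurd e (by decide))]
  -- case (0,2k)
  · rw [keyIdx_eq, show keySlot (n,t,(0:Fin 3)) = 0 from rfl, gen_2]
    simp only [Matrix.cons_val_zero]
    rw [coeff_Z, if_neg (by rintro ⟨e1,e2,e3⟩; omega),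
      if_neg (by rw [trip_eq_iff]; rintro ⟨e,-,-⟩; omega)]
  -- case (0,2d)
  · rw [keyIdx_eq, show keySlot (n,t,(0:Fin 3)) = 0 from rfl, gen_2]
    simp only [Matrix.cons_val_zero]
    rw [coeff_Z, if_neg (by rintro ⟨e1,e2,e3⟩; omega),
      if_neg (by rw [trip_eq_iff]; rintro ⟨e,-,-⟩; omega)]
  -- case (1,0)
  · rw [keyIdx_eq, show keySlot (n,t,(1:Fin 3)) = 1 from rfl, gen_0]
    simp only [Matrix.cons_val_one, Matrix.head_cons, Matrix.cons_val_zero]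
    rw [coeff_zero, if_neg (by rw [trip_eq_iff]; rintro ⟨-,-,e⟩; exact absurd e (by decide))]
  -- case (1,1)
  · rw [keyIdx_eq, show keySlot (n,t,(1:Fin 3)) = 1 from rfl, gen_1]
    simp only [Matrix.cons_val_one, Matrix.head_cons, Matrix.cons_val_zero]
    rw [coeff_Z]
    by_cases h : n = n' ∧ t = t'
    · obtain ⟨rfl, rfl⟩ := h
      rw [if_pos ⟨rfl, rfl, rfl⟩, if_pos rfl]
    · rw [if_neg (by rintro ⟨e1,e2,e3⟩; exact h ⟨by omega, by omega⟩),
        if_neg (by rw [trip_eq_iff]; rintro ⟨e1,e2,-⟩; exact h ⟨e1,e2⟩)]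
  -- case (1,2k)
  · rw [keyIdx_eq, show keySlot (n,t,(1:Fin 3)) = 1 from rfl, gen_2]
    simp only [Matrix.cons_val_one, Matrix.head_cons, Matrix.cons_val_zero]
    rw [coeff_negZ, if_neg (by rintro ⟨e1,e2,e3⟩; omega),
      if_neg (by rw [trip_eq_iff]; rintro ⟨e,-,-⟩; omega)]
  -- case (1,2d)
  · rw [keyIdx_eq, show keySlot (n,t,(1:Fin 3)) = 1 from rfl, gen_2]
    simp only [Matrix.cons_val_one, Matrix.head_cons, Matrix.cons_val_zero]
    rw [coeff_negZ, if_neg (by rintro ⟨e1,e2,e3⟩; omega),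
      if_neg (by rw [trip_eq_iff]; rintro ⟨e,-,-⟩; omega)]
  -- case (2k,0)
  · rw [keyIdx_eq, show keySlot (k,t,(2:Fin 3)) = 0 from rfl, gen_0]
    simp only [Matrix.cons_val_zero]
    rw [coeff_Z, if_neg (by rintro ⟨e1,e2,e3⟩; omega),
      if_neg (by rw [trip_eq_iff]; rintro ⟨e,-,-⟩; omega)]
  -- case (2k,1)
  · rw [keyIdx_eq, show keySlot (k,t,(2:Fin 3)) = 0 from rfl, gen_1]
    simp only [Matrix.cons_val_zero]
    rw [coeff_zero, if_neg (by rw [trip_eq_iff]; rintro ⟨-,-,e⟩; exact absurd e (by decide))]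
  -- case (2k,2k)
  · rw [keyIdx_eq, show keySlot (k,t,(2:Fin 3)) = 0 from rfl, gen_2]
    simp only [Matrix.cons_val_zero]
    rw [coeff_Z]
    by_cases h : t = t'
    · subst h
      rw [if_pos ⟨rfl, rfl, rfl⟩, if_pos rfl]
    · rw [if_neg (by rintro ⟨e1,e2,e3⟩; exact h (by omega)),
        if_neg (by rw [trip_eq_iff]; rintro ⟨-,e,-⟩; exact h e)]
  -- case (2k,2d)
  · rw [keyIdx_eq, show keySlot (k,t,(2:Fin 3)) = 0 from rfl, gen_2]
    simp only [Matrix.cons_val_zero]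
    rw [coeff_Z, if_neg (by rintro ⟨e1,e2,e3⟩; omega),
      if_neg (by rw [trip_eq_iff]; rintro ⟨e,-,-⟩; omega)]
  -- case (2d,0)
  · rw [keyIdx_eq, show keySlot (d+1,t,(2:Fin 3)) = 0 from rfl, gen_0]
    simp only [Matrix.cons_val_zero]
    rw [coeff_Z, if_neg (by rintro ⟨e1,e2,e3⟩; omega),
      if_neg (by rw [trip_eq_iff]; rintro ⟨e,-,-⟩; omega)]
  -- case (2d,1)
  · rw [keyIdx_eq, show keySlot (d+1,t,(2:Fin 3)) = 0 from rfl, gen_1]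
    simp only [Matrix.cons_val_zero]
    rw [coeff_zero, if_neg (by rw [trip_eq_iff]; rintro ⟨-,-,e⟩; exact absurd e (by decide))]
  -- case (2d,2k)
  · rw [keyIdx_eq, show keySlot (d+1,t,(2:Fin 3)) = 0 from rfl, gen_2]
    simp only [Matrix.cons_val_zero]
    rw [coeff_Z, if_neg (by rintro ⟨e1,e2,e3⟩; omega),
      if_neg (by rw [trip_eq_iff]; rintro ⟨e,-,-⟩; omega)]
  -- case (2d,2d)
  · rw [keyIdx_eq, show keySlot (d+1,t,(2:Fin 3)) = 0 from rfl, gen_2]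
    simp only [Matrix.cons_val_zero]
    rw [coeff_Z]
    by_cases h : t = t'
    · subst h
      rw [if_pos ⟨rfl, rfl, rfl⟩, if_pos rfl]
    · rw [if_neg (by rintro ⟨e1,e2,e3⟩; exact h (by omega)),
        if_neg (by rw [trip_eq_iff]; rintro ⟨-,e,-⟩; exact h e)]

lemma gen_indep (d k : ℕ) (hk2 : k ≤ d) :
    LinearIndependent ℂ (fun x : (Sgen d k : Finset (ℕ × ℕ × Fin 3)) =>
      gen d (x : ℕ × ℕ × Fin 3)) := by
  rw [linearIndependent_iff']
  intro s g hsum i hi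
  have hco := congrArg (fun v : Fin 3 → MvPolynomial (Fin 3) ℂ =>
    coeff (keyIdx d (i : ℕ × ℕ × Fin 3)) (v (keySlot (i : ℕ × ℕ × Fin 3)))) hsum
  simp only [Finset.sum_apply, Pi.smul_apply, coeff_sum, coeff_smul, Pi.zero_apply,
    coeff_zero, smul_eq_mul] at hco
  have hterm : ∀ x ∈ s, g x * coeff (keyIdx d (i : ℕ × ℕ × Fin 3))
      (gen d (x : ℕ × ℕ × Fin 3) (keySlot (i : ℕ × ℕ × Fin 3)))
      = if x = i then g x else 0 := by
    intro x _
    rw [delta d k hk2 i.2 x.2]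
    by_cases h : (i : ℕ × ℕ × Fin 3) = (x : ℕ × ℕ × Fin 3)
    · rw [if_pos h, if_pos (Subtype.coe_injective h).symm, mul_one]
    · rw [if_neg h, if_neg (fun e => h (by rw [e])), mul_zero]
  rw [Finset.sum_congr rfl hterm, Finset.sum_ite_eq' s i] at hco
  rw [if_pos hi] at hco
  exact hco

lemma gauss_sum (k : ℕ) : ∀ d, k ≤ d →
    2 * (∑ n ∈ Finset.Ioc k d, (n+1)) + (k^2+2*k+2) + k + (d+1) = d^2+4*d+3 := by
  intro d
  induction d with
  | zero =>
    intro h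
    interval_cases k
    simp
  | succ m ih =>
    intro h
    rcases Nat.lt_or_ge k (m+1) with h' | h'
    · have hk : k ≤ m := by omega
      rw [Finset.sum_Ioc_succ_top hk]
      have := ih hk
      have e : (m+1)^2 = m^2 + 2*m + 1 := by ring
      set Q := m^2
      set K2 := k^2
      omega
    · have hk : k = m + 1 := by omega
      subst hk
      rw [Finset.Ioc_self, Finset.sum_empty]
      ring

lemma card_Sgen (d k : ℕ) (hk2 : k ≤ d) :
    (Sgen d k).card = d^2+4*d+3 - (k^2+2*k+2) := by
  classical
  have hinj : ∀ (n : ℕ) (s : Fin 3), Function.Injective (fun t : ℕ => (n, t, s)) := by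
    intro n s a b h
    simpa [Prod.ext_iff] using h
  have hcardbi : ∀ s : Fin 3,
      ((Finset.Ioc k d).biUnion fun n =>
        (Finset.range (n+1)).image fun t => (n, t, s)).card
      = ∑ n ∈ Finset.Ioc k d, (n+1) := by
    intro s
    rw [Finset.card_biUnion]
    · refine Finset.sum_congr rfl fun n _ => ?_
      rw [Finset.card_image_of_injective _ (hinj n s), Finset.card_range]
    · intro a _ b _ hab
      simp only [Finset.disjoint_left, Finset.mem_image, Finset.mem_range]
      rintro x ⟨t, ht, rfl⟩ ⟨t', ht', he⟩
      have hp : b = a ∧ t' = t ∧ True := by simpa [Prod.ext_iff] using he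
      exact hab hp.1.symm
  have hc2 : (((Finset.range k).image fun t => (k, t, (2:Fin 3)))
      ∪ ((Finset.range (d+1)).image fun t => (d+1, t, (2:Fin 3)))).card = k + (d+1) := by
    rw [Finset.card_union_of_disjoint, Finset.card_image_of_injective _ (hinj k 2),
      Finset.card_image_of_injective _ (hinj (d+1) 2), Finset.card_range, Finset.card_range]
    simp only [Finset.disjoint_left, Finset.mem_image, Finset.mem_range]
    rintro x ⟨t, ht, rfl⟩ ⟨t', ht', he⟩
    have hp : d + 1 = k ∧ t' = t ∧ True := by simpa [Prod.ext_iff] using he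
    omega
  have hdisj1 : Disjoint
      ((Finset.Ioc k d).biUnion fun n => (Finset.range (n+1)).image fun t => (n, t, (0:Fin 3)))
      ((Finset.Ioc k d).biUnion fun n => (Finset.range (n+1)).image fun t => (n, t, (1:Fin 3))) := by
    simp only [Finset.disjoint_left, Finset.mem_biUnion, Finset.mem_image]
    rintro x ⟨n, _, t, _, rfl⟩ ⟨n', _, t', _, he⟩
    have hp : n = n' ∧ t = t' ∧ (0:Fin 3) = 1 := by simpa [Prod.ext_iff] using he.symm
    exact absurd hp.2.2 (by decide)
  have hdisj2 : Disjoint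
      (((Finset.Ioc k d).biUnion fun n => (Finset.range (n+1)).image fun t => (n, t, (0:Fin 3)))
        ∪ ((Finset.Ioc k d).biUnion fun n => (Finset.range (n+1)).image fun t => (n, t, (1:Fin 3))))
      (((Finset.range k).image fun t => (k, t, (2:Fin 3)))
        ∪ ((Finset.range (d+1)).image fun t => (d+1, t, (2:Fin 3)))) := by
    simp only [Finset.disjoint_left, Finset.mem_union, Finset.mem_biUnion, Finset.mem_image,
      Finset.mem_range]
    rintro x (⟨n, _, t, _, rfl⟩ | ⟨n, _, t, _, rfl⟩) (⟨t', _, he⟩ | ⟨t', _, he⟩)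
    · have hp : n = k ∧ t = t' ∧ (0:Fin 3) = 2 := by simpa [Prod.ext_iff] using he.symm
      exact absurd hp.2.2 (by decide)
    · have hp : n = d + 1 ∧ t = t' ∧ (0:Fin 3) = 2 := by simpa [Prod.ext_iff] using he.symm
      exact absurd hp.2.2 (by decide)
    · have hp : n = k ∧ t = t' ∧ (1:Fin 3) = 2 := by simpa [Prod.ext_iff] using he.symm
      exact absurd hp.2.2 (by decide)
    · have hp : n = d + 1 ∧ t = t' ∧ (1:Fin 3) = 2 := by simpa [Prod.ext_iff] using he.symm
      exact absurd hp.2.2 (by decide)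
  rw [Sgen, Finset.card_union_of_disjoint hdisj2, Finset.card_union_of_disjoint hdisj1,
    hcardbi 0, hcardbi 1, hc2]
  have := gauss_sum k d hk2
  omega

lemma E3_sub_single0 (i j m : ℕ) : E3 (i+1) j m - Finsupp.single 0 1 = E3 i j m := by
  ext a; fin_cases a <;> simp [E3, Finsupp.single_apply]
lemma E3_sub_single1 (i j m : ℕ) : E3 i (j+1) m - Finsupp.single 1 1 = E3 i j m := by
  ext a; fin_cases a <;> simp [E3, Finsupp.single_apply]
lemma E2_sub_single0 (i j : ℕ) : E2 (i+1) j - Finsupp.single 0 1 = E2 i j := by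
  ext a; fin_cases a <;> simp [E2, Finsupp.single_apply]

lemma mem_support_E3_0 {i j m : ℕ} (h : i ≠ 0) : (0 : Fin 3) ∈ (E3 i j m).support := by
  rw [Finsupp.mem_support_iff, E3_apply0]; exact h
lemma not_mem_support_E3_1 {i m : ℕ} : (1 : Fin 3) ∉ (E3 i 0 m).support := by
  rw [Finsupp.mem_support_iff, E3_apply1]; simp
lemma not_mem_support_E3_2 {i j : ℕ} : (2 : Fin 3) ∉ (E3 i j 0).support := by
  rw [Finsupp.mem_support_iff, E3_apply2]; simp
lemma mem_support_E3_1 {i j m : ℕ} (h : j ≠ 0) : (1 : Fin 3) ∈ (E3 i j m).support := by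
  rw [Finsupp.mem_support_iff, E3_apply1]; exact h
lemma mem_support_E2_0 {i j : ℕ} (h : i ≠ 0) : (0 : Fin 2) ∈ (E2 i j).support := by
  rw [Finsupp.mem_support_iff, E2_apply0]; exact h
lemma not_mem_support_E2_1 {i : ℕ} : (1 : Fin 2) ∉ (E2 i 0).support := by
  rw [Finsupp.mem_support_iff, E2_apply1]; simp

lemma key_zero (d k : ℕ) (hk1 : 1 ≤ k) (hk2 : k ≤ d)
    (v : Fin 3 → MvPolynomial (Fin 3) ℂ) (hv : v ∈ DkFiber d k)
    (hc0 : ∀ x ∈ Sgen d k, coeff (keyIdx d x) (v (keySlot x)) = 0) : v = 0 := by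
  obtain ⟨hhom, heuler, hvan0, hvan1, hdic⟩ := (mem_DkFiber_iff d k v).mp hv
  rw [eulerMap_apply] at heuler
  rw [dicriticalMap_apply] at hdic
  have hA : ∀ n t, k < n → n ≤ d → t ≤ n → coeff (E3 t (n-t) (d+1-n)) (v 0) = 0 := by
    intro n t h1 h2 ht
    have := hc0 (n,t,0) (mem_Sgen.mpr (Or.inl ⟨n,t,⟨h1,h2⟩,ht,Or.inl rfl⟩))
    rwa [keyIdx_eq, keySlot_0] at this
  have hB : ∀ n t, k < n → n ≤ d → t ≤ n → coeff (E3 t (n-t) (d+1-n)) (v 1) = 0 := by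
    intro n t h1 h2 ht
    have := hc0 (n,t,1) (mem_Sgen.mpr (Or.inl ⟨n,t,⟨h1,h2⟩,ht,Or.inr rfl⟩))
    rwa [keyIdx_eq, keySlot_1] at this
  have hC : ∀ t, t < k → coeff (E3 t (k-t) (d+1-k)) (v 0) = 0 := by
    intro t ht
    have := hc0 (k,t,2) (mem_Sgen.mpr (Or.inr (Or.inl ⟨t,ht,rfl⟩)))
    rwa [keyIdx_eq, keySlot_2] at this
  have hD : ∀ t, t < d+1 → coeff (E3 t (d+1-t) 0) (v 0) = 0 := by
    intro t ht
    have := hc0 (d+1,t,2) (mem_Sgen.mpr (Or.inr (Or.inr ⟨t,ht,rfl⟩)))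
    rw [keyIdx_eq, keySlot_2] at this
    rwa [Nat.sub_self] at this
  -- v 0 = 0
  have ha0 : v 0 = 0 := by
    ext m
    rw [coeff_zero]
    by_cases hdeg : m 0 + m 1 + m 2 = d + 1
    swap
    · exact (hhom 0).coeff_eq_zero (by rw [degree_fin3]; omega)
    · set i := m 0 with hi
      set j := m 1 with hj
      set l := m 2 with hl
      have hm3 : m = E3 i j l := eq_E3 m
      by_cases h1 : i + j < k
      · have hcomp := hvan0 (i+j) h1
        have := coeff_hc_dehom (hhom 0) i j (i+j) rfl
        rw [hcomp, coeff_zero] at this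
        rw [hm3, show l = d+1-(i+j) from by omega]
        exact this.symm
      by_cases h2 : i + j = k
      · by_cases hj0 : j = 0
        · have hco := congrArg (coeff (E2 (k+1) 0)) hdic
          rw [coeff_add, coeff_mul_X', coeff_mul_X', coeff_zero,
            if_pos (mem_support_E2_0 (by omega)), if_neg not_mem_support_E2_1,
            E2_sub_single0, add_zero] at hco
          have hkey := coeff_hc_dehom (hhom 0) k 0 k (by omega)
          rw [hco] at hkey
          rw [hm3, show i = k from by omega, hj0, show l = d+1-k from by omega]
          exact hkey.symm
        · have := hC i (by omega)
          rw [hm3, show j = k - i from by omega, show l = d+1-k from by omega]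
          exact this
      by_cases h3 : i + j ≤ d
      · have := hA (i+j) i (by omega) h3 (by omega)
        rw [hm3, show j = (i+j) - i from by omega, show l = d+1-(i+j) from by omega]
        exact this
      · -- i + j = d + 1
        by_cases hj0 : j = 0
        · have hco := congrArg (coeff (E3 (d+2) 0 0)) heuler
          rw [coeff_add, coeff_add, coeff_mul_X', coeff_mul_X', coeff_mul_X', coeff_zero,
            if_pos (mem_support_E3_0 (by omega)), if_neg not_mem_support_E3_1,
            if_neg not_mem_support_E3_2,
            show E3 (d+2) 0 0 - Finsupp.single 0 1 = E3 (d+1) 0 0 from E3_sub_single0 (d+1) 0 0,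
            add_zero, add_zero] at hco
          rw [hm3, show i = d+1 from by omega, hj0, show l = 0 from by omega]
          exact hco
        · have := hD i (by omega)
          rw [hm3, show j = d+1-i from by omega, show l = 0 from by omega]
          exact this
  -- b_k = 0
  have hbk : homogeneousComponent k (dehom (v 1)) = 0 := by
    rw [ha0, map_zero, map_zero, zero_mul, zero_add] at hdic
    rcases mul_eq_zero.mp hdic with h | h
    · exact h
    · exact absurd h (X_ne_zero 1)
  -- v 1 = 0
  have ha1 : v 1 = 0 := by
    rw [ha0, zero_mul, zero_add] at heuler
    ext m
    rw [coeff_zero]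
    by_cases hdeg : m 0 + m 1 + m 2 = d + 1
    swap
    · exact (hhom 1).coeff_eq_zero (by rw [degree_fin3]; omega)
    · set i := m 0 with hi
      set j := m 1 with hj
      set l := m 2 with hl
      have hm3 : m = E3 i j l := eq_E3 m
      by_cases h1 : i + j < k
      · have hcomp := hvan1 (i+j) h1
        have := coeff_hc_dehom (hhom 1) i j (i+j) rfl
        rw [hcomp, coeff_zero] at this
        rw [hm3, show l = d+1-(i+j) from by omega]
        exact this.symm
      by_cases h2 : i + j = k
      · have := coeff_hc_dehom (hhom 1) i j k h2
        rw [hbk, coeff_zero] at this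
        rw [hm3, show l = d+1-k from by omega]
        exact this.symm
      by_cases h3 : i + j ≤ d
      · have := hB (i+j) i (by omega) h3 (by omega)
        rw [hm3, show j = (i+j) - i from by omega, show l = d+1-(i+j) from by omega]
        exact this
      · -- i + j = d+1, use Euler
        have hco := congrArg (coeff (E3 i (j+1) 0)) heuler
        rw [coeff_add, coeff_mul_X', coeff_mul_X', coeff_zero,
          if_pos (mem_support_E3_1 (by omega)), if_neg not_mem_support_E3_2,
          E3_sub_single1, add_zero] at hco
        rw [hm3, show l = 0 from by omega]
        exact hco
  -- v 2 = 0
  have ha2 : v 2 = 0 := by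
    rw [ha0, ha1, zero_mul, zero_mul, zero_add, zero_add] at heuler
    rcases mul_eq_zero.mp heuler with h | h
    · exact h
    · exact absurd h (X_ne_zero 2)
  funext i
  fin_cases i
  · exact ha0
  · exact ha1
  · exact ha2

theorem dim_DkFiber (d k : ℕ) (hd : 1 ≤ d) (hk1 : 1 ≤ k) (hk2 : k ≤ d) :
    Module.finrank ℂ (DkFiber d k) = d ^ 2 + 4 * d + 3 - (k ^ 2 + 2 * k + 2) := by
  classical
  have hspan_ge : Submodule.span ℂ (gen d '' ↑(Sgen d k)) ≤ DkFiber d k :=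
    Submodule.span_le.mpr (by rintro _ ⟨x, hx, rfl⟩; exact gen_mem d k hk2 hx)
  have hspan_le : DkFiber d k ≤ Submodule.span ℂ (gen d '' ↑(Sgen d k)) := by
    intro v hv
    have hmem : v - ∑ x ∈ Sgen d k,
        (coeff (keyIdx d x) (v (keySlot x))) • gen d x ∈ DkFiber d k :=
      Submodule.sub_mem _ hv (Submodule.sum_mem _ fun x hx =>
        Submodule.smul_mem _ _ (gen_mem d k hk2 hx))
    have hzero : v - ∑ x ∈ Sgen d k,
        (coeff (keyIdx d x) (v (keySlot x))) • gen d x = 0 := by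
      apply key_zero d k hk1 hk2 _ hmem
      intro x hx
      rw [Pi.sub_apply, coeff_sub, Finset.sum_apply]
      simp only [Pi.smul_apply, coeff_sum, coeff_smul, smul_eq_mul]
      have hterm : ∀ y ∈ Sgen d k,
          coeff (keyIdx d y) (v (keySlot y)) * coeff (keyIdx d x) (gen d y (keySlot x))
            = if y = x then coeff (keyIdx d y) (v (keySlot y)) else 0 := by
        intro y hy
        rw [delta d k hk2 hx hy]
        by_cases h : x = y
        · rw [if_pos h, if_pos h.symm, mul_one]
        · rw [if_neg h, if_neg (fun e => h e.symm), mul_zero]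
      rw [Finset.sum_congr rfl hterm, Finset.sum_ite_eq' (Sgen d k) x, if_pos hx, sub_self]
    have hveq : v = ∑ x ∈ Sgen d k, (coeff (keyIdx d x) (v (keySlot x))) • gen d x :=
      sub_eq_zero.mp hzero
    rw [hveq]
    exact Submodule.sum_mem _ fun x hx =>
      Submodule.smul_mem _ _ (Submodule.subset_span ⟨x, hx, rfl⟩)
  have heq : DkFiber d k = Submodule.span ℂ (gen d '' ↑(Sgen d k)) :=
    le_antisymm hspan_le hspan_ge
  have hrange : Set.range (fun x : (Sgen d k : Finset (ℕ × ℕ × Fin 3)) =>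
      gen d (x : ℕ × ℕ × Fin 3)) = gen d '' ↑(Sgen d k) := by
    ext w
    constructor
    · rintro ⟨⟨y, hy⟩, rfl⟩
      exact ⟨y, hy, rfl⟩
    · rintro ⟨y, hy, rfl⟩
      exact ⟨⟨y, hy⟩, rfl⟩
  rw [heq, ← hrange, finrank_span_eq_card (gen_indep d k hk2), Fintype.card_coe,
    card_Sgen d k hk2]
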